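/- Cauchy–Bolzano criterion (necessity): Let X be a Dedekind complete weakly σ-distributive Riesz space and T a time scale. If f : [a,b]_T → X is HK Δ-integrable on [a,b]_T, then there exists a (D)-sequence (c_{i,j}) in X such that for every φ : ℕ → ℕ there exists a Δ-gauge δ for [a,b]_T with |S(f,D₁) − S(f,D₂)| < ⋁_i c_{i,φ(i)} for all δ-fine HK partitions D₁, D₂ of [a,b]_T. -/
import Mathlib


open Finset

/-- A `(D)`-sequence (regulator) in a Dedekind complete Riesz space:
a bounded double sequence whose rows are decreasing with infimum `0`. -/
def IsDSeq {X : Type*} [ConditionallyCompleteLattice X] [AddCommGroup X]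
    (A : ℕ → ℕ → X) : Prop :=
  BddAbove (Set.range fun p : ℕ × ℕ => A p.1 p.2) ∧
  BddBelow (Set.range fun p : ℕ × ℕ => A p.1 p.2) ∧
  (∀ i, Antitone (A i)) ∧ (∀ i, (⨅ j, A i j) = 0)

/-- Weak σ-distributivity of a Dedekind complete Riesz space. -/
def WeaklySigmaDistributive (X : Type*) [ConditionallyCompleteLattice X]
    [AddCommGroup X] : Prop :=
  ∀ A : ℕ → ℕ → X, IsDSeq A → (⨅ φ : ℕ → ℕ, ⨆ i, A i (φ i)) = 0

/-- Forward jump operator of a time scale `T`. -/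
noncomputable def tsSigma (T : Set ℝ) (t : ℝ) : ℝ := sInf {s | s ∈ T ∧ t < s}

/-- A Δ-gauge on the time-scale interval `[a,b]_T`. -/
structure DeltaGauge (T : Set ℝ) (a b : ℝ) where
  dL : ℝ → ℝ
  dR : ℝ → ℝ
  hL : ∀ ξ ∈ T ∩ Set.Ioc a b, 0 < dL ξ
  hR : ∀ ξ ∈ T ∩ Set.Ico a b, 0 < dR ξ
  hLa : 0 ≤ dL a
  hRb : 0 ≤ dR b
  hmu : ∀ ξ ∈ T ∩ Set.Ico a b, tsSigma T ξ - ξ ≤ dR ξ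

/-- A tagged partition of the time-scale interval `[a,b]_T`. -/
structure TSPartition (T : Set ℝ) (a b : ℝ) where
  n : ℕ
  t : ℕ → ℝ
  tag : ℕ → ℝ
  hn : 0 < n
  h0 : t 0 = a
  hb : t n = b
  hmono : ∀ k < n, t k < t (k + 1)
  htT : ∀ k ≤ n, t k ∈ T
  htag : ∀ k < n, tag k ∈ T ∩ Set.Icc (t k) (t (k + 1))

/-- `δ`-fineness of a tagged partition. -/
def TSPartition.IsFine {T : Set ℝ} {a b : ℝ} (P : TSPartition T a b)
    (δ : DeltaGauge T a b) : Prop :=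
  ∀ k < P.n, T ∩ Set.Icc (P.t k) (P.t (k + 1)) ⊆
    Set.Ioo (P.tag k - δ.dL (P.tag k)) (P.tag k + δ.dR (P.tag k))

/-- Riemann sum of `f` over the tagged partition `P`. -/
def RS {X : Type*} [AddCommGroup X] [Module ℝ X] {T : Set ℝ} {a b : ℝ}
    (f : ℝ → X) (P : TSPartition T a b) : X :=
  ∑ k ∈ Finset.range P.n, (P.t (k + 1) - P.t k) • f (P.tag k)

/-- `x` is the Henstock–Kurzweil Δ-integral of `f` on `[a,b]_T`. -/
def HKIntegral {X : Type*} [ConditionallyCompleteLattice X] [AddCommGroup X]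
    [Module ℝ X] (T : Set ℝ) (a b : ℝ) (f : ℝ → X) (x : X) : Prop :=
  ∃ A : ℕ → ℕ → X, IsDSeq A ∧ ∀ φ : ℕ → ℕ, ∃ δ : DeltaGauge T a b,
    ∀ P : TSPartition T a b, P.IsFine δ → |RS f P - x| < ⨆ i, A i (φ i)


section Aux

variable {X : Type*} [ConditionallyCompleteLattice X] [AddCommGroup X]
    [CovariantClass X X (· + ·) (· ≤ ·)] [Module ℝ X] [PosSMulMono ℝ X]

/-- Doubling is an order isomorphism of `X`. -/
noncomputable def doubleIso : X ≃o X where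
  toFun y := (2 : ℝ) • y
  invFun y := (2 : ℝ)⁻¹ • y
  left_inv y := by show (2:ℝ)⁻¹ • ((2:ℝ) • y) = y; rw [smul_smul]; norm_num
  right_inv y := by show (2:ℝ) • ((2:ℝ)⁻¹ • y) = y; rw [smul_smul]; norm_num
  map_rel_iff' := by
    intro u v
    constructor
    · intro h
      have h2 := smul_le_smul_of_nonneg_left h (by norm_num : (0:ℝ) ≤ (2:ℝ)⁻¹)
      simpa [smul_smul] using h2
    · intro h
      exact smul_le_smul_of_nonneg_left h (by norm_num)

end Aux

theorem hk_cauchy_necessity {X : Type*} [ConditionallyCompleteLattice X] [AddCommGroup X]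
    [CovariantClass X X (· + ·) (· ≤ ·)] [Module ℝ X] [PosSMulMono ℝ X]
    (hwsd : WeaklySigmaDistributive X)
    (T : Set ℝ) (hT : IsClosed T) (a b : ℝ) (ha : a ∈ T) (hb : b ∈ T) (hab : a < b)
    (f : ℝ → X) (x : X) (hf : HKIntegral T a b f x) :
    ∃ C : ℕ → ℕ → X, IsDSeq C ∧ ∀ φ : ℕ → ℕ, ∃ δ : DeltaGauge T a b,
      ∀ P₁ P₂ : TSPartition T a b, P₁.IsFine δ → P₂.IsFine δ →
        |RS f P₁ - RS f P₂| < ⨆ i, C i (φ i) := by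
  obtain ⟨A, ⟨hub, hlb, hanti, hinf⟩, hA⟩ := hf
  obtain ⟨u, hu⟩ := hub
  obtain ⟨l, hl⟩ := hlb
  have hu' : ∀ i j, A i j ≤ u := fun i j => hu ⟨(i, j), rfl⟩
  have hl' : ∀ i j, l ≤ A i j := fun i j => hl ⟨(i, j), rfl⟩
  set e : X ≃o X := doubleIso with he
  have he_apply : ∀ y : X, e y = y + y := fun y => (two_smul ℝ y)
  refine ⟨fun i j => A i j + A i j, ⟨⟨u + u, ?_⟩, ⟨l + l, ?_⟩, fun i => ?_, fun i => ?_⟩, ?_⟩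
  · rintro _ ⟨p, rfl⟩
    exact add_le_add (hu' p.1 p.2) (hu' p.1 p.2)
  · rintro _ ⟨p, rfl⟩
    exact add_le_add (hl' p.1 p.2) (hl' p.1 p.2)
  · intro j k hjk
    exact add_le_add (hanti i hjk) (hanti i hjk)
  · have hbb : BddBelow (Set.range (A i)) := ⟨l, by rintro _ ⟨j, rfl⟩; exact hl' i j⟩
    have : (⨅ j, A i j + A i j) = ⨅ j, e (A i j) := by
      simp only [he_apply]
    rw [this, ← e.map_ciInf hbb, hinf i, he_apply, add_zero]
  · intro φ
    obtain ⟨δ, hδ⟩ := hA φ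
    refine ⟨δ, fun P₁ P₂ h₁ h₂ => ?_⟩
    have hba : BddAbove (Set.range fun i => A i (φ i)) :=
      ⟨u, by rintro _ ⟨i, rfl⟩; exact hu' i (φ i)⟩
    have hsum : (⨆ i, A i (φ i) + A i (φ i)) = (⨆ i, A i (φ i)) + ⨆ i, A i (φ i) := by
      have : (⨆ i, A i (φ i) + A i (φ i)) = ⨆ i, e (A i (φ i)) := by
        simp only [he_apply]
      rw [this, ← e.map_ciSup hba, he_apply]
    rw [hsum]
    calc |RS f P₁ - RS f P₂| = |(RS f P₁ - x) + -(RS f P₂ - x)| := by abel_nf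
      _ ≤ |RS f P₁ - x| + |-(RS f P₂ - x)| := abs_add_le _ _
      _ = |RS f P₁ - x| + |RS f P₂ - x| := by rw [abs_neg]
      _ < (⨆ i, A i (φ i)) + ⨆ i, A i (φ i) := add_lt_add (hδ P₁ h₁) (hδ P₂ h₂)
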